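/- arXiv:1806.02625 — 2 statements merged into one kernel-verified Lean document; each statement's English description precedes it below -/
import Mathlib

section
/- Let r, t be positive integers and let G be a finite simple graph whose adjacency spectrum is the multiset {−t, t, 0 (with multiplicity 2t + r − 2)}, i.e., whose adjacency characteristic polynomial is x^(2t + r − 2) · (x − t)(x + t). Then G is connected if and only if G is isomorphic to a complete bipartite graph K_{p,q}, where p and q are positive integers satisfying p + q = r + 2t and pq = t² (i.e., p and q are the two roots of x² − (r + 2t)x + t² = 0). -/
open SimpleGraph Polynomial

/-- The multicone graph `K_r ∇ sK_t`: the join of the complete graph on `r` vertices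
with `s` disjoint copies of the complete graph on `t` vertices. -/
def multicone (r s t : ℕ) : SimpleGraph (Fin r ⊕ Fin s × Fin t) where
  Adj v w := v ≠ w ∧ ∀ i a j b, v = Sum.inr (i, a) → w = Sum.inr (j, b) → i = j
  symm := by
    constructor
    rintro v w ⟨hne, h⟩
    exact ⟨hne.symm, fun i a j b hv hw => (h j b i a hw hv).symm⟩
  loopless := ⟨fun v h => h.1 rfl⟩

noncomputable instance (r s t : ℕ) : DecidableRel (multicone r s t).Adj :=
  Classical.decRel _

noncomputable instance (r s t : ℕ) : DecidableRel ((multicone r s t)ᶜ).Adj :=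
  Classical.decRel _

section Aux

open Matrix

lemma charmatrix_diagonal' {n : Type*} [Fintype n] [DecidableEq n] (d : n → ℝ) :
    charmatrix (diagonal d) = diagonal (fun i => X - C (d i)) := by
  ext i j
  by_cases h : i = j
  · subst h; simp
  · rw [charmatrix_apply_ne _ _ _ h, diagonal_apply_ne _ h, diagonal_apply_ne _ h, map_zero,
      neg_zero]

lemma charpoly_diagonal' {n : Type*} [Fintype n] [DecidableEq n] (d : n → ℝ) :
    (diagonal d).charpoly = ∏ i, (X - C (d i)) := by
  rw [Matrix.charpoly, charmatrix_diagonal', det_diagonal]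

lemma charpoly_hermitian {n : Type*} [Fintype n] [DecidableEq n]
    {A : Matrix n n ℝ} (hA : A.IsHermitian) :
    A.charpoly = ∏ i, (X - C (hA.eigenvalues i)) := by
  have hd : star (hA.eigenvectorUnitary : Matrix n n ℝ) * A * (hA.eigenvectorUnitary : Matrix n n ℝ) =
      diagonal (RCLike.ofReal ∘ hA.eigenvalues) := by
    have := hA.conjStarAlgAut_star_eigenvectorUnitary
    simpa [Unitary.conjStarAlgAut_star_apply] using this
  set U : Matrix n n ℝ := (hA.eigenvectorUnitary : Matrix n n ℝ) with hU
  have hUU : star U * U = 1 := Unitary.star_mul_self_of_mem hA.eigenvectorUnitary.2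
  have hUU' : U * star U = 1 := Unitary.mul_star_self_of_mem hA.eigenvectorUnitary.2
  have key : charmatrix (star U * A * U) =
      (C : ℝ →+* ℝ[X]).mapMatrix (star U) * charmatrix A * (C : ℝ →+* ℝ[X]).mapMatrix U := by
    rw [charmatrix, charmatrix, mul_sub, sub_mul, _root_.map_mul, _root_.map_mul]
    congr 1
    have hc : Commute (Matrix.scalar n (X : ℝ[X])) ((C : ℝ →+* ℝ[X]).mapMatrix (star U)) :=
      scalar_commute _ (fun r' => Commute.all _ _) _
    calc Matrix.scalar n (X : ℝ[X])
        = Matrix.scalar n (X : ℝ[X]) *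
          ((C : ℝ →+* ℝ[X]).mapMatrix (star U) * (C : ℝ →+* ℝ[X]).mapMatrix U) := by
          rw [← _root_.map_mul, hUU, _root_.map_one, mul_one]
      _ = _ := by rw [← mul_assoc, ← hc.eq]
  have h2 : (C : ℝ →+* ℝ[X]).mapMatrix U * (C : ℝ →+* ℝ[X]).mapMatrix (star U) = 1 := by
    rw [← _root_.map_mul, hUU', _root_.map_one]
  have h3 : (star U * A * U).charpoly = A.charpoly := by
    rw [Matrix.charpoly, Matrix.charpoly, key, det_mul, det_mul, mul_comm, ← mul_assoc,
      ← det_mul, h2, det_one, one_mul]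
  rw [← h3, hd]
  simp only [Function.comp, RCLike.ofReal_real_eq_id, id_eq]
  exact charpoly_diagonal' _

lemma trace_sq_hermitian {n : Type*} [Fintype n] [DecidableEq n]
    {A : Matrix n n ℝ} (hA : A.IsHermitian) :
    (A * A).trace = ∑ i, hA.eigenvalues i ^ 2 := by
  set U : Matrix n n ℝ := (hA.eigenvectorUnitary : Matrix n n ℝ) with hU
  have hUU : star U * U = 1 := Unitary.star_mul_self_of_mem hA.eigenvectorUnitary.2
  set D : Matrix n n ℝ := diagonal (RCLike.ofReal ∘ hA.eigenvalues) with hD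
  have hst := hA.spectral_theorem
  rw [Unitary.conjStarAlgAut_apply, ← hU, ← hD] at hst
  have : A * A = U * (D * D) * star U := by
    rw [hst]; rw [show U * D * star U * (U * D * star U) = U * (D * (star U * U) * D) * star U by
      simp only [mul_assoc]]
    rw [hUU, mul_one]
  rw [this, Matrix.trace_mul_comm, ← mul_assoc, hUU, one_mul]
  have hDD : D * D = diagonal (fun i => hA.eigenvalues i ^ 2) := by
    rw [hD, diagonal_mul_diagonal]
    funext i; simp [sq]
  rw [hDD, trace_diagonal]

lemma ite01_inj {P Q : Prop} [Decidable P] [Decidable Q]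
    (h : (if P then (1:ℝ) else 0) = if Q then 1 else 0) : P ↔ Q := by
  by_cases hp : P <;> by_cases hq : Q <;> simp_all

lemma rank_two_structure {V : Type} [Fintype V] [DecidableEq V]
    (G : SimpleGraph V) [DecidableRel G.Adj] (hconn : G.Connected)
    (hrank : (G.adjMatrix ℝ).rank = 2) :
    ∃ u v : V, G.Adj u v ∧
      ∀ w w' : V, G.Adj w w' ↔ ¬ (G.Adj w u ↔ G.Adj w' u) := by
  set A := G.adjMatrix ℝ with hA
  have hedge : ∃ u v, G.Adj u v := by
    by_contra h
    push_neg at h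
    have : A = 0 := by
      ext x y; simp [hA, adjMatrix_apply, h x y]
    rw [this, Matrix.rank_zero] at hrank
    exact two_ne_zero hrank.symm
  obtain ⟨u, v, huv⟩ := hedge
  have hvu : G.Adj v u := huv.symm
  refine ⟨u, v, huv, ?_⟩
  have hAxy : ∀ x y, A x y = if G.Adj x y then (1:ℝ) else 0 := fun x y => rfl
  have hind : LinearIndependent ℝ ![A u, A v] := by
    rw [LinearIndependent.pair_iff]
    intro s p hsp
    constructor
    · have := congr_fun hsp v
      simpa [hAxy, huv, (G.loopless.irrefl v)] using this
    · have := congr_fun hsp u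
      simpa [hAxy, hvu, (G.loopless.irrefl u)] using this
  have hle : Submodule.span ℝ {A u, A v} ≤ Submodule.span ℝ (Set.range A) := by
    apply Submodule.span_le.2
    rintro x (rfl | rfl)
    · exact Submodule.subset_span ⟨u, rfl⟩
    · exact Submodule.subset_span ⟨v, rfl⟩
  have hrange : Set.range ![A u, A v] = {A u, A v} := by
    ext z
    simp [Fin.exists_fin_two]
    tauto
  have hspan : Submodule.span ℝ {A u, A v} = Submodule.span ℝ (Set.range A) := by
    apply Submodule.eq_of_le_of_finrank_le hle
    rw [show Set.range A = Set.range A.row from rfl, ← Matrix.rank_eq_finrank_span_row, hrank, ← hrange, finrank_span_eq_card hind]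
    simp
  have hcomb : ∀ w, ∃ a b : ℝ, a • A u + b • A v = A w := by
    intro w
    rw [← Submodule.mem_span_pair, hspan]
    exact Submodule.subset_span ⟨w, rfl⟩
  have hmain : ∀ w, (G.Adj w u ∧ ¬ G.Adj w v ∧ A w = A v) ∨
      (¬ G.Adj w u ∧ G.Adj w v ∧ A w = A u) := by
    intro w
    obtain ⟨a, b, hab⟩ := hcomb w
    have hb : b = if G.Adj w u then (1:ℝ) else 0 := by
      have h0 := congr_fun hab u
      rw [Pi.add_apply, Pi.smul_apply, Pi.smul_apply, smul_eq_mul, smul_eq_mul, hAxy, hAxy,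
        hAxy, if_neg (G.loopless.irrefl u), if_pos hvu] at h0
      simpa using h0
    have ha : a = if G.Adj w v then (1:ℝ) else 0 := by
      have h0 := congr_fun hab v
      rw [Pi.add_apply, Pi.smul_apply, Pi.smul_apply, smul_eq_mul, smul_eq_mul, hAxy, hAxy,
        hAxy, if_neg (G.loopless.irrefl v), if_pos huv] at h0
      simpa using h0
    by_cases hwu : G.Adj w u <;> by_cases hwv : G.Adj w v
    · exfalso
      have := congr_fun hab w
      rw [ha, hb] at this
      simp only [hwu, hwv, if_true, Pi.add_apply, Pi.smul_apply, smul_eq_mul, one_mul,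
        hAxy, (G.loopless.irrefl w), hwu.symm, hwv.symm, if_true, if_false] at this
      norm_num at this
    · left
      refine ⟨hwu, hwv, ?_⟩
      rw [← hab, ha, hb]
      simp [hwu, hwv]
    · right
      refine ⟨hwu, hwv, ?_⟩
      rw [← hab, ha, hb]
      simp [hwu, hwv]
    · exfalso
      have hrow : A w = 0 := by
        rw [← hab, ha, hb]
        simp [hwu, hwv]
      have hiso : ∀ x, ¬ G.Adj w x := by
        intro x hx
        have := congr_fun hrow x
        rw [hAxy] at this
        simp [hx] at this
      have hwu' : w ≠ u := by
        rintro rfl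
        exact hwv huv
      obtain ⟨p⟩ := hconn.preconnected w u
      cases p with
      | nil => exact hwu' rfl
      | cons h _ => exact hiso _ h
  intro w w'
  rcases hmain w with ⟨hwu, hwv, hrw⟩ | ⟨hwu, hwv, hrw⟩ <;>
    rcases hmain w' with ⟨hw'u, hw'v, hrw'⟩ | ⟨hw'u, hw'v, hrw'⟩
  · constructor
    · intro hadj
      have := congr_fun hrw w'
      rw [hAxy, hAxy] at this
      have : G.Adj v w' := (ite01_inj this).1 hadj
      exact (hw'v this.symm).elim
    · intro h
      exact (h (iff_of_true hwu hw'u)).elim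
  · constructor
    · intro _; simp [hwu, hw'u]
    · intro _
      have := congr_fun hrw w'
      rw [hAxy, hAxy] at this
      exact (ite01_inj this).2 hw'v.symm
  · constructor
    · intro _; simp [hwu, hw'u]
    · intro _
      have := congr_fun hrw w'
      rw [hAxy, hAxy] at this
      exact (ite01_inj this).2 hw'u.symm
  · constructor
    · intro hadj
      have := congr_fun hrw w'
      rw [hAxy, hAxy] at this
      have : G.Adj u w' := (ite01_inj this).1 hadj
      exact (hw'u this.symm).elim
    · intro h
      exact (h (iff_of_false hwu hw'u)).elim

lemma completeBipartite_connected {α β : Type} [Nonempty α] [Nonempty β] :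
    (completeBipartiteGraph α β).Connected := by
  rw [connected_iff]
  refine ⟨?_, inferInstance⟩
  intro x y
  obtain ⟨a⟩ := ‹Nonempty α›
  obtain ⟨b⟩ := ‹Nonempty β›
  have hab : ∀ (a : α) (b : β), (completeBipartiteGraph α β).Adj (.inl a) (.inr b) := by simp
  cases x with
  | inl xa => cases y with
    | inl ya => exact ((hab xa b).reachable.trans (hab ya b).symm.reachable)
    | inr yb => exact (hab xa yb).reachable
  | inr xb => cases y with
    | inl ya => exact ((hab ya xb).reachable).symm
    | inr yb => exact ((hab a xb).symm.reachable.trans (hab a yb).reachable)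

lemma bipartite_iso {V : Type} [Fintype V] [DecidableEq V]
    (G : SimpleGraph V) [DecidableRel G.Adj] (u : V)
    (hstruct : ∀ w w' : V, G.Adj w w' ↔ ¬ (G.Adj w u ↔ G.Adj w' u)) :
    Nonempty (G ≃g completeBipartiteGraph
      (Fin (Fintype.card {w // G.Adj w u})) (Fin (Fintype.card {w // ¬ G.Adj w u}))) := by
  classical
  let e : V ≃ Fin (Fintype.card {w // G.Adj w u}) ⊕ Fin (Fintype.card {w // ¬ G.Adj w u}) :=
    (Equiv.sumCompl (fun w => G.Adj w u)).symm.trans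
      (Equiv.sumCongr (Fintype.equivFin _) (Fintype.equivFin _))
  refine ⟨⟨e, ?_⟩⟩
  intro a b
  rw [hstruct a b]
  by_cases ha : G.Adj a u <;> by_cases hb : G.Adj b u <;>
    simp [e, Equiv.sumCompl, ha, hb]

lemma trace_count {V : Type} [Fintype V] [DecidableEq V]
    (G : SimpleGraph V) [DecidableRel G.Adj] (u : V)
    (hstruct : ∀ w w' : V, G.Adj w w' ↔ ¬ (G.Adj w u ↔ G.Adj w' u)) :
    (G.adjMatrix ℝ * G.adjMatrix ℝ).trace =
      2 * (Fintype.card {w // G.Adj w u}) * (Fintype.card {w // ¬ G.Adj w u}) := by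
  classical
  set p := Fintype.card {w // G.Adj w u} with hp
  set q := Fintype.card {w // ¬ G.Adj w u} with hq
  have hpc : (Finset.univ.filter (fun w => G.Adj w u)).card = p := (Fintype.card_subtype _).symm
  have hqc : (Finset.univ.filter (fun w => ¬ G.Adj w u)).card = q := (Fintype.card_subtype _).symm
  have step1 : ∀ w, ∑ x, (G.adjMatrix ℝ) w x * (G.adjMatrix ℝ) x w
      = if G.Adj w u then (q : ℝ) else (p : ℝ) := by
    intro w
    have h1 : ∀ x, (G.adjMatrix ℝ) w x * (G.adjMatrix ℝ) x w
        = if G.Adj w x then (1:ℝ) else 0 := by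
      intro x
      by_cases h : G.Adj w x
      · simp [adjMatrix_apply, h, h.symm]
      · simp [adjMatrix_apply, h, fun h' => h (G.symm.symm _ _ h')]
    simp only [h1]
    rw [Finset.sum_boole]
    by_cases hw : G.Adj w u
    · rw [if_pos hw, ← hqc]
      congr 2
      apply Finset.filter_congr
      intro x _
      rw [hstruct w x]
      simp [hw]
    · rw [if_neg hw, ← hpc]
      congr 2
      apply Finset.filter_congr
      intro x _
      rw [hstruct w x]
      simp [hw]
  have : (G.adjMatrix ℝ * G.adjMatrix ℝ).trace = ∑ w, ∑ x,
      (G.adjMatrix ℝ) w x * (G.adjMatrix ℝ) x w := by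
    simp [Matrix.trace, Matrix.diag, Matrix.mul_apply]
  rw [this]
  simp only [step1]
  rw [Finset.sum_ite, Finset.sum_const, Finset.sum_const, hpc, hqc]
  push_cast
  ring

end Aux

/-- If `G` has adjacency characteristic polynomial `x^(2t+r-2) · (x - t)(x + t)`
(i.e., adjacency spectrum `{-t, t, 0^(2t+r-2)}`), then `G` is connected if and only if
`G` is isomorphic to a complete bipartite graph `K_{p,q}` where `p` and `q` are the two
roots of `x² - (r + 2t)x + t² = 0`. -/
theorem connected_iff_completeBipartite {V : Type} [Fintype V] [DecidableEq V]
    (r t : ℕ) (hr : 1 ≤ r) (ht : 1 ≤ t)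
    (G : SimpleGraph V) [DecidableRel G.Adj]
    (hspec : (G.adjMatrix ℝ).charpoly =
      X ^ (2 * t + r - 2) * (X - C (t : ℝ)) * (X + C (t : ℝ))) :
    G.Connected ↔ ∃ p q : ℕ, 0 < p ∧ 0 < q ∧ p + q = r + 2 * t ∧ p * q = t ^ 2 ∧
      Nonempty (G ≃g completeBipartiteGraph (Fin p) (Fin q)) := by
  classical
  have hA : (G.adjMatrix ℝ).IsHermitian := by
    rw [Matrix.IsHermitian, Matrix.conjTranspose_eq_transpose_of_trivial]
    exact (isSymm_adjMatrix G)
  have ht0 : (t : ℝ) ≠ 0 := by positivity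
  have htn0 : (-(t:ℝ)) ≠ 0 := neg_ne_zero.2 ht0
  constructor
  · intro hconn
    -- the multiset of eigenvalues
    have hch := charpoly_hermitian hA
    have hms : (Finset.univ.val.map hA.eigenvalues : Multiset ℝ)
        = Multiset.replicate (2 * t + r - 2) 0 + {(t : ℝ)} + {(-t : ℝ)} := by
      have h1 : ((Finset.univ.val.map hA.eigenvalues).map fun a => X - C a).prod.roots
          = Finset.univ.val.map hA.eigenvalues := roots_multiset_prod_X_sub_C _
      rw [Multiset.map_map] at h1
      have h2 : (Finset.univ.val.map (fun i => X - C (hA.eigenvalues i))).prod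
          = ∏ i, (X - C (hA.eigenvalues i)) := rfl
      rw [show ((fun a => X - C a) ∘ hA.eigenvalues) = fun i => X - C (hA.eigenvalues i)
          from rfl, h2, ← hch, hspec] at h1
      rw [← h1]
      have hX : (X ^ (2 * t + r - 2) * (X - C (t:ℝ)) : ℝ[X]) ≠ 0 :=
        mul_ne_zero (pow_ne_zero _ X_ne_zero) (X_sub_C_ne_zero _)
      have hXa : ((X + C (t:ℝ)) : ℝ[X]) ≠ 0 := by
        have := X_sub_C_ne_zero (-t : ℝ); rwa [map_neg, sub_neg_eq_add] at this
      rw [roots_mul (mul_ne_zero hX hXa), roots_mul hX, roots_pow, roots_X, roots_X_sub_C,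
        show ((X + C (t:ℝ)) : ℝ[X]) = X - C (-t : ℝ) by rw [map_neg, sub_neg_eq_add],
        roots_X_sub_C]
      rw [Multiset.nsmul_singleton]
    -- card V
    have hcard : Fintype.card V = 2 * t + r - 2 + 2 := by
      have := congrArg Multiset.card hms
      simpa using this
    -- rank = 2
    have hrank : (G.adjMatrix ℝ).rank = 2 := by
      rw [hA.rank_eq_card_non_zero_eigs, Fintype.card_subtype]
      have h1 : (Finset.univ.filter (fun i => hA.eigenvalues i ≠ 0)).card
          = Multiset.card ((Finset.univ.val.map hA.eigenvalues).filter (fun x => x ≠ 0)) := by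
        rw [Multiset.filter_map, Multiset.card_map]
        rfl
      rw [h1, hms]
      rw [Multiset.filter_add, Multiset.filter_add]
      rw [Multiset.filter_singleton, Multiset.filter_singleton]
      rw [if_pos ht0, if_pos htn0]
      have : Multiset.filter (fun x => x ≠ 0) (Multiset.replicate (2*t+r-2) (0:ℝ)) = 0 := by
        apply Multiset.filter_eq_nil.2
        intro a ha
        rw [Multiset.eq_of_mem_replicate ha]
        simp
      rw [this]
      simp
    -- sum of squares of eigenvalues
    have hsumsq : ∑ i, hA.eigenvalues i ^ 2 = 2 * (t:ℝ)^2 := by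
      have h1 : ∑ i, hA.eigenvalues i ^ 2
          = ((Finset.univ.val.map hA.eigenvalues).map (fun x => x^2)).sum := by
        rw [Multiset.map_map]
        rfl
      rw [h1, hms]
      rw [Multiset.map_add, Multiset.map_add, Multiset.map_replicate, Multiset.map_singleton,
        Multiset.map_singleton, Multiset.sum_add, Multiset.sum_add, Multiset.sum_replicate,
        Multiset.sum_singleton, Multiset.sum_singleton]
      rw [neg_sq]
      norm_num
      ring
    -- structure
    obtain ⟨u, v, huv, hstruct⟩ := rank_two_structure G hconn hrank
    set p := Fintype.card {w // G.Adj w u} with hpdef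
    set q := Fintype.card {w // ¬ G.Adj w u} with hqdef
    have hppos : 0 < p := Fintype.card_pos_iff.2 ⟨⟨v, huv.symm⟩⟩
    have hqpos : 0 < q := Fintype.card_pos_iff.2 ⟨⟨u, G.loopless.irrefl u⟩⟩
    have hpq : p + q = Fintype.card V := by
      rw [hpdef, hqdef, ← Fintype.card_sum]
      exact Fintype.card_congr (Equiv.sumCompl _)
    have hsum : p + q = r + 2 * t := by
      rw [hpq, hcard]; omega
    have htr := trace_count G u hstruct
    rw [trace_sq_hermitian hA, hsumsq] at htr
    have hprod : p * q = t ^ 2 := by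
      have : ((p * q : ℕ) : ℝ) = ((t ^ 2 : ℕ) : ℝ) := by
        push_cast
        nlinarith [htr]
      exact_mod_cast this
    exact ⟨p, q, hppos, hqpos, hsum, hprod, bipartite_iso G u hstruct⟩
  · rintro ⟨p, q, hp, hq, -, -, ⟨iso⟩⟩
    haveI : Nonempty (Fin p) := ⟨⟨0, hp⟩⟩
    haveI : Nonempty (Fin q) := ⟨⟨0, hq⟩⟩
    exact (iso.connected_iff).2 completeBipartite_connected
end

section
/- Let r, s, t be positive integers. The Laplacian spectrum of the multicone graph K_r ∇ sK_t is the multiset {r + st with multiplicity r, r + t with multiplicity s(t − 1), r with multiplicity s − 1, 0 with multiplicity 1}; equivalently the characteristic polynomial of its Laplacian matrix is x · (x − r)^(s − 1) · (x − (r + t))^(s(t − 1)) · (x − (r + st))^r. -/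
open SimpleGraph Polynomial

section aux

open Matrix

/-- det of `a·I + c·J` on `Fin m`. -/
lemma det_ite_add_const (m : ℕ) (a c : ℝ) (hm : 1 ≤ m) (ha : a ≠ 0) :
    (Matrix.of fun i j : Fin m => (if i = j then a else 0) + c).det
      = a ^ (m - 1) * (a + m * c) := by
  have h1 : (Matrix.of fun i j : Fin m => (if i = j then a else 0) + c)
      = a • (1 + Matrix.replicateCol Unit (fun _ => c / a) * Matrix.replicateRow Unit (fun _ => (1 : ℝ))) := by
    ext i j
    simp only [Matrix.of_apply, Matrix.smul_apply, Matrix.add_apply, Matrix.one_apply,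
      Matrix.mul_apply, Matrix.replicateCol_apply, Matrix.replicateRow_apply, Finset.univ_unique,
      Finset.sum_singleton, mul_one, smul_eq_mul]
    by_cases h : i = j <;> simp [h] <;> field_simp <;> ring
  rw [h1, Matrix.det_smul, Matrix.det_one_add_replicateCol_mul_replicateRow]
  have hdot : (fun _ : Fin m => (1:ℝ)) ⬝ᵥ (fun _ => c / a) = m * (c / a) := by
    simp [dotProduct]
  rw [hdot]
  have hpow : a ^ m = a ^ (m - 1) * a := by
    rw [← pow_succ]; congr 1; omega
  rw [Fintype.card_fin, hpow]
  field_simp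

lemma charmatrix_lap_map_apply {V : Type*} [Fintype V] [DecidableEq V]
    (G : SimpleGraph V) [DecidableRel G.Adj] (x : ℝ) (v w : V) :
    ((charmatrix (G.lapMatrix ℝ)).map (eval x)) v w =
      if v = w then x - G.degree v else if G.Adj v w then 1 else 0 := by
  by_cases h : v = w
  · subst h
    rw [Matrix.map_apply, charmatrix_apply_eq]
    simp [SimpleGraph.lapMatrix, SimpleGraph.degMatrix]
  · rw [Matrix.map_apply, charmatrix_apply_ne _ _ _ h, if_neg h]
    simp [SimpleGraph.lapMatrix, SimpleGraph.degMatrix, Matrix.diagonal_apply_ne _ h,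
      apply_ite (eval x)]

end aux

lemma multicone_adj_inl_inl {r s t : ℕ} {a b : Fin r} :
    (multicone r s t).Adj (Sum.inl a) (Sum.inl b) ↔ a ≠ b := by
  constructor
  · rintro ⟨hne, -⟩ rfl; exact hne rfl
  · intro h
    exact ⟨by simpa using h, fun i a' j b' hv _ => by simp at hv⟩

lemma multicone_adj_inl_inr {r s t : ℕ} (a : Fin r) (p : Fin s × Fin t) :
    (multicone r s t).Adj (Sum.inl a) (Sum.inr p) :=
  ⟨by simp, fun i a' j b' hv _ => by simp at hv⟩

lemma multicone_adj_inr_inl {r s t : ℕ} (p : Fin s × Fin t) (a : Fin r) :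
    (multicone r s t).Adj (Sum.inr p) (Sum.inl a) :=
  ((multicone r s t).adj_symm (multicone_adj_inl_inr a p))

lemma multicone_adj_inr_inr {r s t : ℕ} {p q : Fin s × Fin t} :
    (multicone r s t).Adj (Sum.inr p) (Sum.inr q) ↔ p ≠ q ∧ p.1 = q.1 := by
  constructor
  · rintro ⟨hne, h⟩
    exact ⟨fun hpq => hne (by rw [hpq]), h p.1 p.2 q.1 q.2 rfl rfl⟩
  · rintro ⟨hne, heq⟩
    refine ⟨by simpa using hne, ?_⟩
    rintro i a j b h1 h2
    rw [Sum.inr.injEq] at h1 h2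
    rw [h1, h2] at heq
    exact heq

lemma multicone_degree_inl (r s t : ℕ) (a : Fin r) :
    (multicone r s t).degree (Sum.inl a) = r + s * t - 1 := by
  have h : (multicone r s t).neighborFinset (Sum.inl a) = Finset.univ.erase (Sum.inl a) := by
    ext w
    rcases w with b | p
    · simp [SimpleGraph.mem_neighborFinset, multicone_adj_inl_inl, ne_comm, Sum.inl.injEq]
    · simp [SimpleGraph.mem_neighborFinset, multicone_adj_inl_inr]
  rw [← SimpleGraph.card_neighborFinset_eq_degree, h,
    Finset.card_erase_of_mem (Finset.mem_univ _), Finset.card_univ]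
  simp

lemma multicone_degree_inr (r s t : ℕ) (ht : 1 ≤ t) (p : Fin s × Fin t) :
    (multicone r s t).degree (Sum.inr p) = r + t - 1 := by
  have h : (multicone r s t).neighborFinset (Sum.inr p) =
      (Finset.univ.map ⟨Sum.inl, Sum.inl_injective⟩)
        ∪ ((Finset.univ.map ⟨fun b => Sum.inr (p.1, b),
            fun x y h => by simpa using h⟩).erase (Sum.inr p)) := by
    ext w
    rcases w with b | ⟨j, b⟩
    · simp [SimpleGraph.mem_neighborFinset, multicone_adj_inr_inl]
    · simp only [SimpleGraph.mem_neighborFinset, multicone_adj_inr_inr, Finset.mem_union,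
        Finset.mem_erase, Finset.mem_map, Finset.mem_univ, Function.Embedding.coeFn_mk,
        true_and, Sum.inr.injEq, Prod.ext_iff, ne_eq, Prod.mk.injEq]
      constructor
      · rintro ⟨hne, hj⟩
        exact Or.inr ⟨fun h => hne (by simp [h.1, h.2]), ⟨b, by simp [hj]⟩⟩
      · rintro (⟨c, hc⟩ | ⟨hne, c, hc⟩)
        · exact absurd hc (by simp)
        · exact ⟨fun h => hne ⟨h.1.symm, h.2.symm⟩, congrArg Prod.fst (Sum.inr.inj hc)⟩
  have hmem : (Sum.inr p : Fin r ⊕ Fin s × Fin t)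
      ∈ Finset.univ.map ⟨fun b => Sum.inr (p.1, b), fun x y h => by simpa using h⟩ := by
    simp only [Finset.mem_map, Finset.mem_univ, Function.Embedding.coeFn_mk, true_and]
    exact ⟨p.2, rfl⟩
  rw [← SimpleGraph.card_neighborFinset_eq_degree, h,
    Finset.card_union_of_disjoint (by simp [Finset.disjoint_left]),
    Finset.card_map, Finset.card_erase_of_mem hmem, Finset.card_map]
  simp only [Finset.card_univ, Fintype.card_fin]
  omega

lemma sum_if_block {n m : ℕ} (g : Fin n → ℝ) (j0 : Fin m) :
    (∑ w : Fin m × Fin n, if w.1 = j0 then g w.2 else 0) = ∑ b, g b := by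
  rw [Fintype.sum_prod_type, Finset.sum_eq_single j0 (fun i _ hne => by simp [hne]) (by simp)]
  simp

/-- The Laplacian characteristic polynomial of the multicone graph `K_r ∇ sK_t` is
`x · (x - r)^(s-1) · (x - (r+t))^(s(t-1)) · (x - (r+st))^r`; equivalently its Laplacian
spectrum is `{(r+st)^r, (r+t)^(s(t-1)), r^(s-1), 0^1}`. -/
theorem multicone_lap_charpoly (r s t : ℕ) (hr : 1 ≤ r) (hs : 1 ≤ s) (ht : 1 ≤ t) :
    ((multicone r s t).lapMatrix ℝ).charpoly =
      X * (X - C (r : ℝ)) ^ (s - 1) * (X - C ((r : ℝ) + (t : ℝ))) ^ (s * (t - 1)) *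
        (X - C ((r : ℝ) + (s : ℝ) * (t : ℝ))) ^ r := by
  apply Polynomial.eq_of_infinite_eval_eq
  have hfin : ({(r:ℝ), (r:ℝ)+(t:ℝ), (r:ℝ)+(s:ℝ)*(t:ℝ)} : Set ℝ).Finite :=
    (((Set.finite_singleton _).insert _).insert _)
  refine Set.Infinite.mono ?_ hfin.infinite_compl
  intro x hx
  simp only [Set.mem_compl_iff, Set.mem_insert_iff, Set.mem_singleton_iff, not_or] at hx
  obtain ⟨hxc, hxα, hxν⟩ := hx
  simp only [Set.mem_setOf_eq]
  obtain ⟨α, hαdef⟩ : ∃ a : ℝ, a = x - ((r:ℝ)+(t:ℝ)) := ⟨_, rfl⟩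
  obtain ⟨c, hcdef⟩ : ∃ a : ℝ, a = x - (r:ℝ) := ⟨_, rfl⟩
  obtain ⟨ν, hνdef⟩ : ∃ a : ℝ, a = x - ((r:ℝ)+(s:ℝ)*(t:ℝ)) := ⟨_, rfl⟩
  have hα : α ≠ 0 := by rw [hαdef]; exact sub_ne_zero.mpr hxα
  have hc : c ≠ 0 := by rw [hcdef]; exact sub_ne_zero.mpr hxc
  have hν : ν ≠ 0 := by rw [hνdef]; exact sub_ne_zero.mpr hxν
  have hcα : c = α + (t : ℝ) := by rw [hcdef, hαdef]; ring
  have hcα' : α + (t : ℝ) ≠ 0 := hcα ▸ hc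
  -- evaluate the right-hand side
  simp only [eval_mul, eval_pow, eval_sub, eval_X, eval_C]
  rw [← hνdef, ← hαdef, ← hcdef]
  -- turn the left-hand side into a determinant
  have hLHS : eval x ((multicone r s t).lapMatrix ℝ).charpoly
      = ((Matrix.charmatrix ((multicone r s t).lapMatrix ℝ)).map (eval x)).det := by
    rw [Matrix.charpoly, ← Polynomial.coe_evalRingHom, RingHom.map_det]; rfl
  rw [hLHS]
  -- the block structure
  obtain ⟨Db, hDb⟩ : ∃ M : Matrix (Fin t) (Fin t) ℝ,
    M = Matrix.of fun a b => (if a = b then α else 0) + 1 := ⟨_, rfl⟩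
  obtain ⟨Eb, hEb⟩ : ∃ M : Matrix (Fin t) (Fin t) ℝ,
    M = Matrix.of fun a b => (if a = b then α⁻¹ else 0) - (α * c)⁻¹ := ⟨_, rfl⟩
  obtain ⟨Dm, hDm⟩ : ∃ M : Matrix (Fin s × Fin t) (Fin s × Fin t) ℝ,
    M = (Matrix.blockDiagonal fun _ : Fin s => Db).submatrix (Equiv.prodComm (Fin s) (Fin t))
      (Equiv.prodComm (Fin s) (Fin t)) := ⟨_, rfl⟩
  obtain ⟨Em, hEm⟩ : ∃ M : Matrix (Fin s × Fin t) (Fin s × Fin t) ℝ,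
    M = (Matrix.blockDiagonal fun _ : Fin s => Eb).submatrix (Equiv.prodComm (Fin s) (Fin t))
      (Equiv.prodComm (Fin s) (Fin t)) := ⟨_, rfl⟩
  obtain ⟨Am, hAm⟩ : ∃ M : Matrix (Fin r) (Fin r) ℝ,
    M = Matrix.of fun i j => (if i = j then ν else 0) + 1 := ⟨_, rfl⟩
  obtain ⟨Bm, hBm⟩ : ∃ M : Matrix (Fin r) (Fin s × Fin t) ℝ,
    M = Matrix.of fun _ _ => 1 := ⟨_, rfl⟩
  obtain ⟨Cm, hCmdef⟩ : ∃ M : Matrix (Fin s × Fin t) (Fin r) ℝ,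
    M = Matrix.of fun _ _ => 1 := ⟨_, rfl⟩
  have hmap : (Matrix.charmatrix ((multicone r s t).lapMatrix ℝ)).map (eval x)
      = Matrix.fromBlocks Am Bm Cm Dm := by
    ext v w
    rw [charmatrix_lap_map_apply]
    rcases v with a | p <;> rcases w with b | q
    · rw [Matrix.fromBlocks_apply₁₁, hAm]
      by_cases hab : a = b
      · subst hab
        rw [if_pos rfl, multicone_degree_inl, Matrix.of_apply, if_pos rfl, hνdef]
        have h1 : (1:ℕ) ≤ r + s * t := by nlinarith
        push_cast [Nat.cast_sub h1]
        ring
      · rw [if_neg (by simpa using hab), Matrix.of_apply, if_neg hab,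
          if_pos (multicone_adj_inl_inl.mpr hab)]
        ring
    · rw [Matrix.fromBlocks_apply₁₂, hBm, Matrix.of_apply,
        if_neg (by simp), if_pos (multicone_adj_inl_inr a q)]
    · rw [Matrix.fromBlocks_apply₂₁, hCmdef, Matrix.of_apply,
        if_neg (by simp), if_pos (multicone_adj_inr_inl p b)]
    · rw [Matrix.fromBlocks_apply₂₂, hDm, Matrix.submatrix_apply]
      simp only [Equiv.prodComm_apply, Prod.fst_swap, Prod.snd_swap,
        Matrix.blockDiagonal_apply]
      by_cases hpq : p = q
      · subst hpq
        rw [if_pos rfl, if_pos rfl, multicone_degree_inr r s t ht, hDb, Matrix.of_apply,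
          if_pos rfl, hαdef]
        have h1 : (1:ℕ) ≤ r + t := by omega
        push_cast [Nat.cast_sub h1]
        ring
      · rw [if_neg (by simpa using hpq)]
        by_cases h1 : p.1 = q.1
        · have h2 : p.2 ≠ q.2 := fun h2 => hpq (Prod.ext h1 h2)
          rw [if_pos (multicone_adj_inr_inr.mpr ⟨hpq, h1⟩), if_pos h1, hDb, Matrix.of_apply,
            if_neg h2]
          ring
        · rw [if_neg h1, if_neg (fun h => h1 (multicone_adj_inr_inr.mp h).2)]
  rw [hmap]
  -- the bottom-right block is invertible with explicit inverse
  have hDbEb : Db * Eb = 1 := by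
    ext a b
    rw [Matrix.mul_apply, Matrix.one_apply]
    simp only [hDb, hEb, Matrix.of_apply, add_mul, mul_sub, ite_mul, mul_ite, zero_mul,
      mul_zero, one_mul, mul_one, Finset.sum_add_distrib, Finset.sum_sub_distrib,
      Finset.sum_ite_eq, Finset.sum_ite_eq', Finset.mem_univ, if_true, Finset.sum_const,
      Finset.card_univ, Fintype.card_fin, smul_eq_mul, nsmul_eq_mul]
    rw [hcα]
    by_cases h : a = b
    · subst h
      simp only [if_pos rfl]
      field_simp [hα, hcα']
      ring
    · simp only [if_neg h]
      field_simp [hα, hcα']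
      ring
  have hDE : Dm * Em = 1 := by
    rw [hDm, hEm, Matrix.submatrix_mul_equiv, ← Matrix.blockDiagonal_mul]
    simp only [hDbEb]
    rw [show (fun _ : Fin s => (1 : Matrix (Fin t) (Fin t) ℝ)) = 1 from rfl,
      Matrix.blockDiagonal_one]
    exact Matrix.submatrix_one_equiv (Equiv.prodComm (Fin s) (Fin t))
  haveI : Invertible Dm := invertibleOfRightInverse _ _ hDE
  have hinv : ⅟Dm = Em := invOf_eq_right_inv hDE
  rw [Matrix.det_fromBlocks₂₂, hinv]
  -- compute B * Em * C
  have hBE : Bm * Em = Matrix.of fun _ _ => c⁻¹ := by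
    ext i q
    rw [Matrix.mul_apply, Matrix.of_apply]
    simp only [hBm, hEm, Matrix.of_apply, one_mul, Matrix.submatrix_apply,
      Equiv.prodComm_apply, Prod.fst_swap, Prod.snd_swap, Matrix.blockDiagonal_apply]
    rw [sum_if_block (fun b => Eb b q.2) q.1]
    simp only [hEb, Matrix.of_apply, Finset.sum_sub_distrib, Finset.sum_ite_eq,
      Finset.sum_ite_eq', Finset.mem_univ, if_true, Finset.sum_const, Finset.card_univ,
      Fintype.card_fin, smul_eq_mul, nsmul_eq_mul]
    rw [hcα]
    field_simp [hα, hcα']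
    ring
  have hBEC : Bm * Em * Cm = Matrix.of fun _ _ => (s:ℝ) * (t:ℝ) * c⁻¹ := by
    rw [hBE]
    ext i j
    rw [Matrix.mul_apply, Matrix.of_apply]
    simp only [hCmdef, Matrix.of_apply, mul_one, Finset.sum_const, Finset.card_univ,
      Fintype.card_prod, Fintype.card_fin, nsmul_eq_mul]
    push_cast
    ring
  rw [hBEC]
  have hAsub : Am - Matrix.of (fun _ _ : Fin r => (s:ℝ) * (t:ℝ) * c⁻¹)
      = Matrix.of fun i j : Fin r => (if i = j then ν else 0) + (1 - (s:ℝ)*(t:ℝ)*c⁻¹) := by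
    ext i j
    simp only [Matrix.sub_apply, hAm, Matrix.of_apply]
    ring
  rw [hAsub]
  -- determinants
  have hdetD : Dm.det = (α ^ (t-1) * c) ^ s := by
    rw [hDm, Matrix.det_submatrix_equiv_self, Matrix.det_blockDiagonal]
    have h2 : Db.det = α ^ (t-1) * (α + (t:ℝ) * 1) := hDb ▸ det_ite_add_const t α 1 ht hα
    rw [Finset.prod_const, h2, Finset.card_univ, Fintype.card_fin, mul_one, ← hcα]
  have hdetS : (Matrix.of fun i j : Fin r =>
        (if i = j then ν else 0) + (1 - (s:ℝ)*(t:ℝ)*c⁻¹)).det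
      = ν ^ (r-1) * (ν + (r:ℝ) * (1 - (s:ℝ)*(t:ℝ)*c⁻¹)) :=
    det_ite_add_const r ν _ hr hν
  rw [hdetD, hdetS]
  -- final arithmetic
  have key : ν + (r:ℝ) * (1 - (s:ℝ)*(t:ℝ)*c⁻¹) = x * ν / c := by
    rw [hνdef, hcdef]
    field_simp [sub_ne_zero.mpr hxc]
    ring
  rw [key]
  have h3 : c ^ s = c ^ (s-1) * c := by rw [← pow_succ]; congr 1; omega
  have h4 : ν ^ r = ν ^ (r-1) * ν := by rw [← pow_succ]; congr 1; omega
  rw [mul_pow, ← pow_mul, Nat.mul_comm (t-1) s, h3, h4]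
  field_simp [hc]
end
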